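/- Let m ≥ 2, let G_l be the l-th branch of the m-th root, and define 𝔊^l_{a₁,a₂} as above. Then for every n ≥ 1 and all integers a₁, a₂: (d^n/ds^n) 𝔊^l_{a₁,a₂}(u,s) = iⁿ n! Σ_{0≤j≤n} (−1)^{n−j} C(−a₁/m, j) C(−a₂/m, n−j) 𝔊^l_{a₁+jm, a₂+(n−j)m}(u,s) for all (u,s) ∈ [-1,1]² with s ≠ 0, where C(z,k) is the generalized binomial coefficient. -/

import Mathlib

/-- The argument of a complex number, taken in `[0, 2π)`. -/
noncomputable def argTwoPi (z : ℂ) : ℝ := if 0 ≤ z.arg then z.arg else z.arg + 2 * Real.pi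

/-- The principal branch `G₀` of the `m`-th root:
`G₀(r e^{it}) = r^{1/m} e^{it/m}` for `t ∈ [0, 2π)`. -/
noncomputable def rootBranch (m : ℕ) (z : ℂ) : ℂ :=
  ((‖z‖ ^ ((1 : ℝ) / m) : ℝ) : ℂ) * Complex.exp (Complex.I * ((argTwoPi z / m : ℝ) : ℂ))

/-- The `l`-th branch `G_l = θ^l G₀` of the `m`-th root, where `θ = e^{2πi/m}`. -/
noncomputable def Gl (m l : ℕ) (z : ℂ) : ℂ :=
  Complex.exp (2 * (Real.pi : ℂ) * Complex.I / m) ^ l * rootBranch m z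

/-- The function `𝔊^l_{a₁,a₂}(u,s) = ∫_{-1}^u G_l(v+is)^{-a₁} conj(G_l(v+is))^{-a₂} dv`. -/
noncomputable def frakG (m l : ℕ) (a₁ a₂ : ℤ) (u s : ℝ) : ℂ :=
  ∫ v in (-1:ℝ)..u,
    Gl m l ((v : ℂ) + Complex.I * (s : ℂ)) ^ (-a₁) *
      (starRingEnd ℂ) (Gl m l ((v : ℂ) + Complex.I * (s : ℂ))) ^ (-a₂)

/-- The generalized binomial coefficient `C(z, n) = z(z-1)⋯(z-n+1)/n!`. -/
noncomputable def genBinom (z : ℝ) (n : ℕ) : ℝ :=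
  (∏ i ∈ Finset.range n, (z - (i : ℝ))) / (Nat.factorial n : ℝ)

lemma abs_rootBranch (m : ℕ) (z : ℂ) :
    ‖rootBranch m z‖ = ‖z‖ ^ ((1:ℝ)/m) := by
  unfold rootBranch
  rw [norm_mul, Complex.norm_exp]
  have h1 : (Complex.I * ((argTwoPi z / m : ℝ) : ℂ)).re = 0 := by simp
  rw [h1, Real.exp_zero, mul_one, Complex.norm_real, Real.norm_eq_abs,
    _root_.abs_of_nonneg (Real.rpow_nonneg (norm_nonneg z) _)]

lemma abs_Gl (m l : ℕ) (z : ℂ) :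
    ‖Gl m l z‖ = ‖z‖ ^ ((1:ℝ)/m) := by
  unfold Gl
  rw [norm_mul, norm_pow, Complex.norm_exp]
  have h1 : (2 * (Real.pi : ℂ) * Complex.I / m).re = 0 := by
    simp [Complex.div_re]
  rw [h1, Real.exp_zero, one_pow, one_mul, abs_rootBranch]

lemma Gl_ne_zero (m l : ℕ) {z : ℂ} (hz : z ≠ 0) : Gl m l z ≠ 0 := by
  intro h
  have := abs_Gl m l z
  rw [h, norm_zero] at this
  have h2 : (0:ℝ) < ‖z‖ ^ ((1:ℝ)/m) :=
    Real.rpow_pos_of_pos (norm_pos_iff.mpr hz) _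
  rw [← this] at h2; exact lt_irrefl _ h2

lemma theta_pow (m : ℕ) (hm : m ≠ 0) :
    Complex.exp (2 * (Real.pi : ℂ) * Complex.I / m) ^ m = 1 := by
  rw [← Complex.exp_nat_mul]
  have : (m:ℂ) * (2 * (Real.pi : ℂ) * Complex.I / m) = 2 * Real.pi * Complex.I := by
    have hmC : (m:ℂ) ≠ 0 := Nat.cast_ne_zero.mpr hm
    field_simp
  rw [this, Complex.exp_two_pi_mul_I]

lemma rootBranch_pow (m : ℕ) (hm : m ≠ 0) (z : ℂ) : rootBranch m z ^ m = z := by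
  unfold rootBranch
  rw [mul_pow, ← Complex.exp_nat_mul, ← Complex.ofReal_pow,
    ← Real.rpow_natCast (‖z‖ ^ ((1:ℝ)/m)) m, ← Real.rpow_mul (norm_nonneg z)]
  have h1 : (1:ℝ)/m * m = 1 := by field_simp
  rw [h1, Real.rpow_one]
  have h2 : (m:ℂ) * (Complex.I * ((argTwoPi z / m : ℝ) : ℂ)) = Complex.I * argTwoPi z := by
    have hmC : (m:ℂ) ≠ 0 := Nat.cast_ne_zero.mpr hm
    push_cast
    field_simp
  rw [h2]
  unfold argTwoPi
  split_ifs with h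
  · rw [mul_comm Complex.I ((z.arg:ℝ):ℂ)]; exact Complex.norm_mul_exp_arg_mul_I z
  · push_cast
    rw [mul_add, Complex.exp_add, mul_comm Complex.I (z.arg:ℂ)]
    have h3 : Complex.exp (Complex.I * (2*Real.pi)) = 1 := by
      rw [mul_comm, Complex.exp_two_pi_mul_I]
    rw [h3, mul_one]
    exact Complex.norm_mul_exp_arg_mul_I z

lemma Gl_pow (m l : ℕ) (hm : m ≠ 0) (z : ℂ) : Gl m l z ^ m = z := by
  unfold Gl
  rw [mul_pow, ← pow_mul, mul_comm l m, pow_mul, theta_pow m hm, one_pow, one_mul,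
    rootBranch_pow m hm]

lemma rootBranch_eq_cpow_pos (m : ℕ) (hm : m ≠ 0) {z : ℂ} (hz : 0 < z.im) :
    rootBranch m z = z ^ ((1:ℂ)/m) := by
  have hz0 : z ≠ 0 := by
    intro h; rw [h] at hz; simp at hz
  have harg : 0 ≤ z.arg := Complex.arg_nonneg_iff.mpr hz.le
  have hA : argTwoPi z = z.arg := by unfold argTwoPi; rw [if_pos harg]
  rw [Complex.cpow_def_of_ne_zero hz0]
  unfold rootBranch
  rw [hA, Complex.log]
  rw [Real.rpow_def_of_pos (norm_pos_iff.mpr hz0)]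
  push_cast
  rw [← Complex.exp_add]
  congr 1
  push_cast
  ring

lemma rootBranch_eq_cpow_neg (m : ℕ) (hm : m ≠ 0) {z : ℂ} (hz : z.im < 0) :
    rootBranch m z = Complex.exp (2 * (Real.pi : ℂ) * Complex.I / m) * z ^ ((1:ℂ)/m) := by
  have hz0 : z ≠ 0 := by
    intro h; rw [h] at hz; simp at hz
  have harg : z.arg < 0 := Complex.arg_neg_iff.mpr hz
  have hA : argTwoPi z = z.arg + 2 * Real.pi := by unfold argTwoPi; rw [if_neg (not_le.mpr harg)]
  rw [Complex.cpow_def_of_ne_zero hz0]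
  unfold rootBranch
  rw [hA, Complex.log]
  rw [Real.rpow_def_of_pos (norm_pos_iff.mpr hz0)]
  push_cast
  rw [mul_comm (Complex.exp _) _, mul_assoc, ← Complex.exp_add, ← Complex.exp_add]
  congr 1
  field_simp
  ring

lemma hasDerivAt_affine (v : ℝ) (s₀ : ℝ) :
    HasDerivAt (fun s : ℝ => (v : ℂ) + Complex.I * s) Complex.I s₀ := by
  have h1 : HasDerivAt (fun s : ℝ => (s : ℂ)) 1 s₀ := by
    exact (hasDerivAt_id s₀).ofReal_comp
  simpa using (h1.const_mul Complex.I).const_add (v : ℂ)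

lemma z_ne_zero (v s : ℝ) (hs : s ≠ 0) : (v : ℂ) + Complex.I * s ≠ 0 := by
  intro h
  have : ((v : ℂ) + Complex.I * s).im = s := by simp
  rw [h] at this; simp at this; exact hs this.symm

lemma hasDerivAt_Gl (m l : ℕ) (hm : m ≠ 0) (v : ℝ) {s₀ : ℝ} (hs₀ : s₀ ≠ 0) :
    HasDerivAt (fun s : ℝ => Gl m l ((v : ℂ) + Complex.I * s))
      (Complex.I * (m : ℂ)⁻¹ * Gl m l ((v : ℂ) + Complex.I * s₀) ^ ((1 : ℤ) - m)) s₀ := by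
  have hmC : (m : ℂ) ≠ 0 := Nat.cast_ne_zero.mpr hm
  set z₀ : ℂ := (v : ℂ) + Complex.I * s₀ with hz₀
  have hz0 : z₀ ≠ 0 := z_ne_zero v s₀ hs₀
  have him : z₀.im = s₀ := by simp [hz₀]
  have hG0 : Gl m l z₀ ≠ 0 := Gl_ne_zero m l hz0
  have hslit : z₀ ∈ Complex.slitPlane := Complex.mem_slitPlane_iff.mpr (Or.inr (by rw [him]; exact hs₀))
  -- existence of some derivative
  obtain ⟨d, hd⟩ : ∃ d, HasDerivAt (fun s : ℝ => Gl m l ((v : ℂ) + Complex.I * s)) d s₀ := by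
    have hcp : HasDerivAt (fun z : ℂ => z ^ ((1:ℂ)/m)) (((1:ℂ)/m) * z₀ ^ ((1:ℂ)/m - 1)) z₀ :=
      (Complex.hasStrictDerivAt_cpow_const hslit).hasDerivAt
    have hcomp := HasDerivAt.comp (x := s₀) (h₂ := fun z : ℂ => z ^ ((1:ℂ)/(m:ℂ)))
      (h := fun s : ℝ => (v : ℂ) + Complex.I * s) hcp (hasDerivAt_affine v s₀)
    rcases lt_or_gt_of_ne hs₀ with hneg | hpos
    · refine ⟨_, HasDerivAt.congr_of_eventuallyEq
        ((hcomp.const_mul (Complex.exp (2 * (Real.pi : ℂ) * Complex.I / m) ^ (l+1)))) ?_⟩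
      have hev : ∀ᶠ s in nhds s₀, s < 0 := eventually_lt_nhds hneg
      filter_upwards [hev] with s hs
      have him' : ((v : ℂ) + Complex.I * s).im < 0 := by simpa using hs
      show Gl m l _ = _
      unfold Gl
      rw [rootBranch_eq_cpow_neg m hm him', pow_succ]
      show _ = _ * (((fun z : ℂ => z ^ ((1:ℂ)/m)) ∘ (fun s : ℝ => (v : ℂ) + Complex.I * s)) s)
      simp only [Function.comp]
      ring
    · refine ⟨_, HasDerivAt.congr_of_eventuallyEq
        ((hcomp.const_mul (Complex.exp (2 * (Real.pi : ℂ) * Complex.I / m) ^ l))) ?_⟩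
      have hev : ∀ᶠ s in nhds s₀, 0 < s := eventually_gt_nhds hpos
      filter_upwards [hev] with s hs
      have him' : 0 < ((v : ℂ) + Complex.I * s).im := by simpa using hs
      show Gl m l _ = _
      unfold Gl
      rw [rootBranch_eq_cpow_pos m hm him']
      rfl
  -- pin down the derivative by uniqueness
  have hpow := HasDerivAt.comp (x := s₀) (h₂ := fun z : ℂ => z ^ m)
      (h := fun s : ℝ => Gl m l ((v : ℂ) + Complex.I * s))
      (hasDerivAt_pow m (Gl m l z₀)) hd
  have heq : (fun s : ℝ => (Gl m l ((v : ℂ) + Complex.I * s)) ^ m)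
      = fun s : ℝ => (v : ℂ) + Complex.I * s := by
    funext s; exact Gl_pow m l hm _
  simp only [Function.comp_def] at hpow
  rw [heq] at hpow
  have huniq : (m : ℂ) * Gl m l z₀ ^ (m - 1) * d = Complex.I :=
    hpow.unique (hasDerivAt_affine v s₀)
  have hd_eq : d = Complex.I * (m : ℂ)⁻¹ * Gl m l z₀ ^ ((1 : ℤ) - m) := by
    have hGpow : Gl m l z₀ ^ (m - 1 : ℕ) ≠ 0 := pow_ne_zero _ hG0
    have h1 : Gl m l z₀ ^ ((1 : ℤ) - m) = (Gl m l z₀ ^ (m - 1 : ℕ))⁻¹ := by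
      rw [← zpow_natCast (Gl m l z₀) (m - 1), ← zpow_neg]
      congr 1
      have : (1:ℤ) ≤ m := by exact_mod_cast Nat.one_le_iff_ne_zero.mpr hm
      push_cast [Nat.cast_sub (Nat.one_le_iff_ne_zero.mpr hm)]
      ring
    rw [h1]
    field_simp
    linear_combination huniq
  rw [← hd_eq]; exact hd

noncomputable def Pfun (m l : ℕ) (a₁ a₂ : ℤ) (v s : ℝ) : ℂ :=
  Gl m l ((v : ℂ) + Complex.I * s) ^ (-a₁) *
    (starRingEnd ℂ) (Gl m l ((v : ℂ) + Complex.I * s)) ^ (-a₂)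

lemma hasDerivAt_P (m l : ℕ) (hm : m ≠ 0) (a₁ a₂ : ℤ) (v : ℝ) {s₀ : ℝ} (hs₀ : s₀ ≠ 0) :
    HasDerivAt (fun s => Pfun m l a₁ a₂ v s)
      (Complex.I * ((-(a₁ : ℂ) / m) * Pfun m l (a₁ + m) a₂ v s₀ +
        ((a₂ : ℂ) / m) * Pfun m l a₁ (a₂ + m) v s₀)) s₀ := by
  have hmC : (m : ℂ) ≠ 0 := Nat.cast_ne_zero.mpr hm
  have hz0 : (v : ℂ) + Complex.I * s₀ ≠ 0 := z_ne_zero v s₀ hs₀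
  have hG : Gl m l ((v : ℂ) + Complex.I * s₀) ≠ 0 := Gl_ne_zero m l hz0
  have hGc : (starRingEnd ℂ) (Gl m l ((v : ℂ) + Complex.I * s₀)) ≠ 0 := by
    simpa using hG
  have hd := hasDerivAt_Gl m l hm v hs₀
  set G := Gl m l ((v : ℂ) + Complex.I * s₀) with hGdef
  set d₀ := Complex.I * (m : ℂ)⁻¹ * G ^ ((1 : ℤ) - m) with hd₀
  have h1 : HasDerivAt (fun s : ℝ => Gl m l ((v : ℂ) + Complex.I * s) ^ (-a₁))
      (((((-a₁ : ℤ)) : ℂ) * G ^ (-a₁ - 1)) * d₀) s₀ :=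
    HasDerivAt.comp (x := s₀) (h₂ := fun z : ℂ => z ^ (-a₁))
      (h := fun s : ℝ => Gl m l ((v : ℂ) + Complex.I * s))
      (hasDerivAt_zpow (-a₁) G (Or.inl hG)) hd
  have hconj : HasDerivAt (fun s : ℝ => (starRingEnd ℂ) (Gl m l ((v : ℂ) + Complex.I * s)))
      ((starRingEnd ℂ) d₀) s₀ := by
    exact hd.star
  have h2 : HasDerivAt (fun s : ℝ => (starRingEnd ℂ) (Gl m l ((v : ℂ) + Complex.I * s)) ^ (-a₂))
      (((((-a₂ : ℤ)) : ℂ) * ((starRingEnd ℂ) G) ^ (-a₂ - 1)) * (starRingEnd ℂ) d₀) s₀ :=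
    HasDerivAt.comp (x := s₀) (h₂ := fun z : ℂ => z ^ (-a₂))
      (h := fun s : ℝ => (starRingEnd ℂ) (Gl m l ((v : ℂ) + Complex.I * s)))
      (hasDerivAt_zpow (-a₂) ((starRingEnd ℂ) G) (Or.inl hGc)) hconj
  have hmul := h1.mul h2
  have hval : ((((-a₁ : ℤ)) : ℂ) * G ^ (-a₁ - 1)) * d₀ * ((starRingEnd ℂ) G) ^ (-a₂) +
      G ^ (-a₁) * (((((-a₂ : ℤ)) : ℂ) * ((starRingEnd ℂ) G) ^ (-a₂ - 1)) * (starRingEnd ℂ) d₀) =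
      Complex.I * ((-(a₁ : ℂ) / m) * Pfun m l (a₁ + m) a₂ v s₀ +
        ((a₂ : ℂ) / m) * Pfun m l a₁ (a₂ + m) v s₀) := by
    have hcd : (starRingEnd ℂ) d₀ =
        -Complex.I * (m : ℂ)⁻¹ * ((starRingEnd ℂ) G) ^ ((1 : ℤ) - m) := by
      rw [hd₀, map_mul, map_mul, map_zpow₀, Complex.conj_I, map_inv₀, map_natCast]
    have e1 : G ^ (-(a₁ + (m : ℤ))) = G ^ (-a₁ - 1) * G ^ ((1 : ℤ) - m) := by
      rw [← zpow_add₀ hG]; ring_nf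
    have e2 : ((starRingEnd ℂ) G) ^ (-(a₂ + (m : ℤ))) =
        ((starRingEnd ℂ) G) ^ (-a₂ - 1) * ((starRingEnd ℂ) G) ^ ((1 : ℤ) - m) := by
      rw [← zpow_add₀ hGc]; ring_nf
    unfold Pfun
    rw [← hGdef, hcd, hd₀, e1, e2]
    push_cast
    ring
  rw [← hval]
  exact hmul

lemma continuous_Gl_v (m l : ℕ) (hm : m ≠ 0) {s : ℝ} (hs : s ≠ 0) :
    Continuous (fun v : ℝ => Gl m l ((v : ℂ) + Complex.I * s)) := by
  have hcont : Continuous (fun v : ℝ => ((v : ℂ) + Complex.I * s) ^ ((1:ℂ)/m)) := by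
    rw [continuous_iff_continuousAt]
    intro v
    have hslit : ((v : ℂ) + Complex.I * s) ∈ Complex.slitPlane :=
      Complex.mem_slitPlane_iff.mpr (Or.inr (by simpa using hs))
    exact (Complex.continuous_ofReal.continuousAt.add continuousAt_const).cpow
      continuousAt_const hslit
  rcases lt_or_gt_of_ne hs with hneg | hpos
  · have heq : (fun v : ℝ => Gl m l ((v : ℂ) + Complex.I * s)) = fun v : ℝ =>
        Complex.exp (2 * (Real.pi : ℂ) * Complex.I / m) ^ (l + 1) *
          ((v : ℂ) + Complex.I * s) ^ ((1:ℂ)/m) := by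
      funext v
      have him : ((v : ℂ) + Complex.I * s).im < 0 := by simpa using hneg
      unfold Gl
      rw [rootBranch_eq_cpow_neg m hm him, pow_succ]
      ring
    rw [heq]; exact continuous_const.mul hcont
  · have heq : (fun v : ℝ => Gl m l ((v : ℂ) + Complex.I * s)) = fun v : ℝ =>
        Complex.exp (2 * (Real.pi : ℂ) * Complex.I / m) ^ l *
          ((v : ℂ) + Complex.I * s) ^ ((1:ℂ)/m) := by
      funext v
      have him : 0 < ((v : ℂ) + Complex.I * s).im := by simpa using hpos
      unfold Gl
      rw [rootBranch_eq_cpow_pos m hm him]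
    rw [heq]; exact continuous_const.mul hcont

lemma continuous_Pfun_v (m l : ℕ) (hm : m ≠ 0) (a b : ℤ) {s : ℝ} (hs : s ≠ 0) :
    Continuous (fun v : ℝ => Pfun m l a b v s) := by
  rw [continuous_iff_continuousAt]
  intro v
  have hG := (continuous_Gl_v m l hm hs).continuousAt (x := v)
  have hGne : Gl m l ((v : ℂ) + Complex.I * s) ≠ 0 := Gl_ne_zero m l (z_ne_zero v s hs)
  have h1 : ContinuousAt (fun v : ℝ => Gl m l ((v : ℂ) + Complex.I * s) ^ (-a)) v :=
    hG.zpow₀ (-a) (Or.inl hGne)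
  have hconj : ContinuousAt
      (fun v : ℝ => (starRingEnd ℂ) (Gl m l ((v : ℂ) + Complex.I * s))) v :=
    Complex.continuous_conj.continuousAt.comp hG
  have hGcne : (starRingEnd ℂ) (Gl m l ((v : ℂ) + Complex.I * s)) ≠ 0 := by simpa using hGne
  have h2 : ContinuousAt
      (fun v : ℝ => (starRingEnd ℂ) (Gl m l ((v : ℂ) + Complex.I * s)) ^ (-b)) v :=
    hconj.zpow₀ (-b) (Or.inl hGcne)
  exact h1.mul h2

lemma abs_zpow_le {w : ℂ} {c R : ℝ} (hc : 0 < c) (h1 : c ≤ ‖w‖)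
    (h2 : ‖w‖ ≤ R) (k : ℤ) :
    ‖w ^ k‖ ≤ (max R c⁻¹) ^ k.natAbs := by
  have hw : 0 < ‖w‖ := lt_of_lt_of_le hc h1
  rw [norm_zpow]
  cases k with
  | ofNat n =>
      rw [Int.ofNat_eq_coe, zpow_natCast]
      simp only [Int.natAbs_natCast]
      exact pow_le_pow_left₀ (norm_nonneg w) (h2.trans (le_max_left _ _)) n
  | negSucc n =>
      rw [zpow_negSucc]
      simp only [Int.natAbs_negSucc]
      have h3 : (‖w‖ ^ (n+1))⁻¹ ≤ (c ^ (n+1))⁻¹ := by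
        apply inv_anti₀ (pow_pos hc _)
        exact pow_le_pow_left₀ hc.le h1 _
      calc (‖w‖ ^ (n+1))⁻¹ ≤ (c ^ (n+1))⁻¹ := h3
        _ = (c⁻¹) ^ (n+1) := by rw [inv_pow]
        _ ≤ (max R c⁻¹) ^ (n+1) :=
            pow_le_pow_left₀ (inv_nonneg.mpr hc.le) (le_max_right _ _) _

lemma abs_Gl_bounds (m l : ℕ) (hm : 2 ≤ m) {z : ℂ} {c R : ℝ} (hc : 0 < c) (hc1 : c ≤ 1)
    (h1 : c ≤ ‖z‖) (hR : 1 ≤ R) (h2 : ‖z‖ ≤ R) :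
    c ≤ ‖Gl m l z‖ ∧ ‖Gl m l z‖ ≤ R := by
  have hm0 : (0:ℝ) < m := by positivity
  have hmle : (1:ℝ)/m ≤ 1 := by
    rw [div_le_one hm0]; exact_mod_cast le_trans (by norm_num) hm
  have hmpos : (0:ℝ) < 1/m := by positivity
  rw [abs_Gl]
  constructor
  · calc c = c ^ (1:ℝ) := (Real.rpow_one c).symm
      _ ≤ c ^ ((1:ℝ)/m) := Real.rpow_le_rpow_of_exponent_ge hc hc1 hmle
      _ ≤ ‖z‖ ^ ((1:ℝ)/m) := Real.rpow_le_rpow hc.le h1 hmpos.le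
  · calc ‖z‖ ^ ((1:ℝ)/m) ≤ R ^ ((1:ℝ)/m) :=
        Real.rpow_le_rpow (norm_nonneg z) h2 hmpos.le
      _ ≤ R ^ (1:ℝ) := Real.rpow_le_rpow_of_exponent_le hR hmle
      _ = R := Real.rpow_one R

lemma abs_Pfun_le (m l : ℕ) (hm : 2 ≤ m) (a b : ℤ) {v s c R : ℝ} (hc : 0 < c) (hc1 : c ≤ 1)
    (hsc : c ≤ |s|) (hR : 1 ≤ R) (hsR : |s| + 1 ≤ R) (hv : |v| ≤ 1) :
    ‖Pfun m l a b v s‖ ≤ (max R c⁻¹) ^ (a.natAbs + b.natAbs) := by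
  set z : ℂ := (v : ℂ) + Complex.I * s with hz
  have habs_im : |z.im| = |s| := by simp [hz]
  have hlow : c ≤ ‖z‖ := le_trans hsc (habs_im ▸ Complex.abs_im_le_norm z)
  have hup : ‖z‖ ≤ R := by
    calc ‖z‖ ≤ |z.re| + |z.im| := Complex.norm_le_abs_re_add_abs_im z
      _ ≤ 1 + |s| := by
          have : |z.re| = |v| := by simp [hz]
          rw [this, habs_im]; linarith
      _ ≤ R := by linarith
  obtain ⟨hg1, hg2⟩ := abs_Gl_bounds m l hm (z := z) hc hc1 hlow hR hup
  have hgc1 : c ≤ ‖(starRingEnd ℂ) (Gl m l z)‖ := by rwa [Complex.norm_conj]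
  have hgc2 : ‖(starRingEnd ℂ) (Gl m l z)‖ ≤ R := by rwa [Complex.norm_conj]
  unfold Pfun
  rw [norm_mul, ← hz]
  calc ‖Gl m l z ^ (-a)‖ * ‖(starRingEnd ℂ) (Gl m l z) ^ (-b)‖
      ≤ (max R c⁻¹) ^ (-a).natAbs * (max R c⁻¹) ^ (-b).natAbs := by
        apply mul_le_mul (abs_zpow_le hc hg1 hg2 (-a)) (abs_zpow_le hc hgc1 hgc2 (-b))
          (norm_nonneg _) (by positivity)
    _ = (max R c⁻¹) ^ (a.natAbs + b.natAbs) := by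
        rw [Int.natAbs_neg, Int.natAbs_neg, pow_add]

lemma frakG_eq (m l : ℕ) (a₁ a₂ : ℤ) (u s : ℝ) :
    frakG m l a₁ a₂ u s = ∫ v in (-1:ℝ)..u, Pfun m l a₁ a₂ v s := rfl

lemma hasDerivAt_frakG (m l : ℕ) (hm : 2 ≤ m) (a₁ a₂ : ℤ) {u : ℝ}
    (hu : u ∈ Set.Icc (-1:ℝ) 1) {s₀ : ℝ} (hs₀ : s₀ ≠ 0) :
    HasDerivAt (fun s => frakG m l a₁ a₂ u s)
      (Complex.I * ((-(a₁ : ℂ) / m) * frakG m l (a₁ + m) a₂ u s₀ +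
        ((a₂ : ℂ) / m) * frakG m l a₁ (a₂ + m) u s₀)) s₀ := by
  have hm0 : m ≠ 0 := by omega
  have hs₀' : 0 < |s₀| := abs_pos.mpr hs₀
  set ε : ℝ := |s₀| / 2 with hε_def
  have hε : 0 < ε := by positivity
  set c : ℝ := min ε 1 with hc_def
  have hc : 0 < c := lt_min hε one_pos
  have hc1 : c ≤ 1 := min_le_right _ _
  set R : ℝ := 2 * |s₀| + 2 with hR_def
  have hR : 1 ≤ R := by nlinarith
  set B : ℝ := max R c⁻¹ with hB_def
  have hB1 : 1 ≤ B := le_trans hR (le_max_left _ _)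
  set N : ℕ := a₁.natAbs + a₂.natAbs + m with hN_def
  set K : ℝ := (|(a₁:ℝ)| + |(a₂:ℝ)|) / m * B ^ N with hK_def
  have hball : ∀ s ∈ Metric.ball s₀ ε, c ≤ |s| ∧ |s| + 1 ≤ R ∧ s ≠ 0 := by
    intro s hs
    rw [Metric.mem_ball, Real.dist_eq] at hs
    have h1 : |s₀| - |s| ≤ |s₀ - s| := abs_sub_abs_le_abs_sub s₀ s
    have h2 : |s| - |s₀| ≤ |s - s₀| := abs_sub_abs_le_abs_sub s s₀
    have h3 : |s₀ - s| = |s - s₀| := abs_sub_comm s₀ s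
    have h4 : ε < |s| := by rw [hε_def] at *; linarith
    refine ⟨le_trans (min_le_left _ _) h4.le, by rw [hR_def]; linarith, ?_⟩
    intro h0; rw [h0] at h4; simp at h4; linarith
  have habs_coef : ‖-(a₁ : ℂ) / m‖ = |(a₁:ℝ)| / m := by
    rw [norm_div, norm_neg]
    simp
  have habs_coef2 : ‖(a₂ : ℂ) / m‖ = |(a₂:ℝ)| / m := by
    rw [norm_div]
    simp
  have key := intervalIntegral.hasDerivAt_integral_of_dominated_loc_of_deriv_le
    (F := fun s v => Pfun m l a₁ a₂ v s)
    (F' := fun s v => Complex.I * ((-(a₁ : ℂ) / m) * Pfun m l (a₁ + m) a₂ v s +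
      ((a₂ : ℂ) / m) * Pfun m l a₁ (a₂ + m) v s))
    (x₀ := s₀) (a := -1) (b := u) (bound := fun _ => K) (s := Metric.ball s₀ ε) (μ := MeasureTheory.volume)
      (Metric.ball_mem_nhds s₀ hε)
    ?_ ?_ ?_ ?_ ?_ ?_
  · -- conclude
    have heq : (∫ v in (-1:ℝ)..u, Complex.I * ((-(a₁ : ℂ) / m) * Pfun m l (a₁ + m) a₂ v s₀ +
        ((a₂ : ℂ) / m) * Pfun m l a₁ (a₂ + m) v s₀)) =
        Complex.I * ((-(a₁ : ℂ) / m) * frakG m l (a₁ + m) a₂ u s₀ +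
          ((a₂ : ℂ) / m) * frakG m l a₁ (a₂ + m) u s₀) := by
      have hint1 : IntervalIntegrable (fun v => Pfun m l (a₁ + m) a₂ v s₀)
          MeasureTheory.volume (-1) u :=
        (continuous_Pfun_v m l hm0 _ _ hs₀).intervalIntegrable _ _
      have hint2 : IntervalIntegrable (fun v => Pfun m l a₁ (a₂ + m) v s₀)
          MeasureTheory.volume (-1) u :=
        (continuous_Pfun_v m l hm0 _ _ hs₀).intervalIntegrable _ _
      rw [intervalIntegral.integral_const_mul, frakG_eq, frakG_eq,
        intervalIntegral.integral_add (hint1.const_mul _) (hint2.const_mul _),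
        intervalIntegral.integral_const_mul, intervalIntegral.integral_const_mul]
    rw [← heq]
    simp only [frakG_eq]
    exact key.2
  · -- hF_meas
    filter_upwards [eventually_ne_nhds hs₀] with s hs
    exact ((continuous_Pfun_v m l hm0 a₁ a₂ hs)).aestronglyMeasurable
  · -- hF_int
    exact (continuous_Pfun_v m l hm0 a₁ a₂ hs₀).intervalIntegrable _ _
  · -- hF'_meas
    exact (continuous_const.mul ((continuous_const.mul
      (continuous_Pfun_v m l hm0 (a₁ + m) a₂ hs₀)).add (continuous_const.mul
      (continuous_Pfun_v m l hm0 a₁ (a₂ + m) hs₀)))).aestronglyMeasurable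
  · -- h_bound
    apply MeasureTheory.ae_of_all
    intro v hv s hs
    obtain ⟨hc_le, hsR, hs_ne⟩ := hball s hs
    have hvmem : v ∈ Set.Ioc (min (-1:ℝ) u) (max (-1:ℝ) u) := hv
    have hv1 : |v| ≤ 1 := by
      obtain ⟨hu1, hu2⟩ := hu
      rw [min_eq_left hu1] at hvmem
      have := hvmem.1
      have := hvmem.2
      have hmax : max (-1:ℝ) u ≤ 1 := max_le (by norm_num) hu2
      rw [abs_le]
      constructor <;> [linarith [hvmem.1]; linarith [hvmem.2, hmax]]
    have hb1 : ‖Pfun m l (a₁ + m) a₂ v s‖ ≤ B ^ N := by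
      calc ‖Pfun m l (a₁ + m) a₂ v s‖ ≤ B ^ ((a₁ + m).natAbs + a₂.natAbs) :=
            abs_Pfun_le m l hm _ _ hc hc1 hc_le hR hsR hv1
        _ ≤ B ^ N := pow_le_pow_right₀ hB1 (by rw [hN_def]; omega)
    have hb2 : ‖Pfun m l a₁ (a₂ + m) v s‖ ≤ B ^ N := by
      calc ‖Pfun m l a₁ (a₂ + m) v s‖ ≤ B ^ (a₁.natAbs + (a₂ + m).natAbs) :=
            abs_Pfun_le m l hm _ _ hc hc1 hc_le hR hsR hv1
        _ ≤ B ^ N := pow_le_pow_right₀ hB1 (by rw [hN_def]; omega)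
    rw [norm_mul, Complex.norm_I, one_mul]
    calc ‖(-(a₁ : ℂ) / m) * Pfun m l (a₁ + m) a₂ v s +
          ((a₂ : ℂ) / m) * Pfun m l a₁ (a₂ + m) v s‖
        ≤ ‖(-(a₁ : ℂ) / m) * Pfun m l (a₁ + m) a₂ v s‖ +
          ‖((a₂ : ℂ) / m) * Pfun m l a₁ (a₂ + m) v s‖ := norm_add_le _ _
      _ = |(a₁:ℝ)| / m * ‖Pfun m l (a₁ + m) a₂ v s‖ +
          |(a₂:ℝ)| / m * ‖Pfun m l a₁ (a₂ + m) v s‖ := by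
            rw [norm_mul, norm_mul, habs_coef, habs_coef2]
      _ ≤ |(a₁:ℝ)| / m * B ^ N + |(a₂:ℝ)| / m * B ^ N := by
            have hm' : (0:ℝ) < m := by positivity
            gcongr <;> positivity
      _ = K := by rw [hK_def]; ring
  · -- bound integrable
    exact intervalIntegrable_const
  · -- h_diff
    apply MeasureTheory.ae_of_all
    intro v hv s hs
    exact hasDerivAt_P m l hm0 a₁ a₂ v (hball s hs).2.2

lemma genBinom_zero (x : ℝ) : genBinom x 0 = 1 := by simp [genBinom]

lemma genBinom_one (x : ℝ) : genBinom x 1 = x := by simp [genBinom]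

lemma genBinom_rec (x : ℝ) (j : ℕ) :
    genBinom x j * (x - j) = ((j : ℝ) + 1) * genBinom x (j + 1) := by
  unfold genBinom
  rw [Finset.prod_range_succ, Nat.factorial_succ]
  have h1 : (Nat.factorial j : ℝ) ≠ 0 := Nat.cast_ne_zero.mpr (Nat.factorial_ne_zero j)
  have h2 : ((j + 1) * Nat.factorial j : ℕ) ≠ 0 := by positivity
  push_cast
  field_simp

lemma step_sum (n : ℕ) (x y : ℝ) (T : ℕ → ℕ → ℂ) :
    ∑ j ∈ Finset.range (n + 1), (-1 : ℂ) ^ (n - j) * ((genBinom x j : ℝ) : ℂ) *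
      ((genBinom y (n - j) : ℝ) : ℂ) *
      ((((x - (j : ℝ)) : ℝ) : ℂ) * T (j + 1) (n - j) +
        ((-(y - ((n - j : ℕ) : ℝ)) : ℝ) : ℂ) * T j (n - j + 1)) =
    (((n : ℝ) + 1 : ℝ) : ℂ) * ∑ j ∈ Finset.range (n + 2), (-1 : ℂ) ^ (n + 1 - j) *
      ((genBinom x j : ℝ) : ℂ) * ((genBinom y (n + 1 - j) : ℝ) : ℂ) * T j (n + 1 - j) := by
  have hrec : ∀ (w : ℝ) (j : ℕ), ((genBinom w j : ℝ) : ℂ) * ((w : ℂ) - (j : ℂ)) =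
      ((j : ℂ) + 1) * ((genBinom w (j + 1) : ℝ) : ℂ) := by
    intro w j
    have h := genBinom_rec w j
    have h2 := congrArg (fun r : ℝ => (r : ℂ)) h
    push_cast at h2
    exact h2
  set f : ℕ → ℂ := fun j => (-1 : ℂ) ^ (n + 1 - j) * ((genBinom x j : ℝ) : ℂ) *
    ((genBinom y (n + 1 - j) : ℝ) : ℂ) * T j (n + 1 - j) with hf
  set a : ℕ → ℂ := fun j => (-1 : ℂ) ^ (n - j) * ((genBinom x j : ℝ) : ℂ) *
    ((genBinom y (n - j) : ℝ) : ℂ) * ((((x - (j : ℝ)) : ℝ) : ℂ) * T (j + 1) (n - j)) with ha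
  set b : ℕ → ℂ := fun j => (-1 : ℂ) ^ (n - j) * ((genBinom x j : ℝ) : ℂ) *
    ((genBinom y (n - j) : ℝ) : ℂ) * (((-(y - ((n - j : ℕ) : ℝ)) : ℝ) : ℂ) * T j (n - j + 1))
    with hb
  have hsplit : ∑ j ∈ Finset.range (n + 1), (-1 : ℂ) ^ (n - j) * ((genBinom x j : ℝ) : ℂ) *
      ((genBinom y (n - j) : ℝ) : ℂ) *
      ((((x - (j : ℝ)) : ℝ) : ℂ) * T (j + 1) (n - j) +
        ((-(y - ((n - j : ℕ) : ℝ)) : ℝ) : ℂ) * T j (n - j + 1)) =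
      (∑ j ∈ Finset.range (n + 1), a j) + ∑ j ∈ Finset.range (n + 1), b j := by
    rw [← Finset.sum_add_distrib]
    apply Finset.sum_congr rfl
    intro j hj
    simp only [ha, hb]
    ring
  rw [hsplit]
  have key_a : a n = (((n : ℝ) + 1 : ℝ) : ℂ) * f (n + 1) := by
    simp only [ha, hf, Nat.sub_self, Nat.add_sub_cancel_left, Nat.add_sub_cancel, pow_zero,
      genBinom_zero]
    push_cast
    linear_combination T (n + 1) 0 * hrec x n
  have key_b : b 0 = (((n : ℝ) + 1 : ℝ) : ℂ) * f 0 := by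
    simp only [hb, hf, Nat.sub_zero, genBinom_zero]
    push_cast
    linear_combination (-(-1 : ℂ) ^ n * T 0 (n + 1)) * hrec y n
  have key_ab : ∀ j ∈ Finset.range n, a j + b (j + 1) = (((n : ℝ) + 1 : ℝ) : ℂ) * f (j + 1) := by
    intro j hj
    rw [Finset.mem_range] at hj
    obtain ⟨k, hk⟩ : ∃ k, n = j + 1 + k := ⟨n - (j + 1), by omega⟩
    have h1 : n - j = k + 1 := by omega
    have h2 : n + 1 - (j + 1) = k + 1 := by omega
    have h3 : n - (j + 1) = k := by omega
    simp only [ha, hb, hf, h1, h2, h3]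
    have hn : ((n : ℂ) + 1) = ((j : ℂ) + 1) + ((k : ℂ) + 1) := by
      have : (n : ℂ) = (j : ℂ) + 1 + (k : ℂ) := by exact_mod_cast congrArg (Nat.cast (R := ℂ)) hk
      rw [this]; ring
    push_cast
    rw [hn]
    linear_combination (-(-1 : ℂ) ^ k * T (j + 1) (k + 1) * ((genBinom y (k + 1) : ℝ) : ℂ)) *
        hrec x j +
      (-(-1 : ℂ) ^ k * T (j + 1) (k + 1) * ((genBinom x (j + 1) : ℝ) : ℂ)) * hrec y k
  rw [Finset.sum_range_succ' f (n + 1), mul_add, Finset.mul_sum,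
    Finset.sum_range_succ (fun k => (((n : ℝ) + 1 : ℝ) : ℂ) * f (k + 1)) n,
    Finset.sum_range_succ a n, Finset.sum_range_succ' b n]
  have hsum : ∑ j ∈ Finset.range n, (((n : ℝ) + 1 : ℝ) : ℂ) * f (j + 1) =
      ∑ j ∈ Finset.range n, (a j + b (j + 1)) := by
    apply Finset.sum_congr rfl
    intro j hj
    rw [key_ab j hj]
  rw [hsum, Finset.sum_add_distrib, key_a, key_b]
  push_cast
  ring

theorem stmt16 (m : ℕ) (hm : 2 ≤ m) (l : ℕ) (hl : l < m) (n : ℕ) (hn : 1 ≤ n) (a₁ a₂ : ℤ)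
    (u s : ℝ) (hu : u ∈ Set.Icc (-1:ℝ) 1) (hs : s ∈ Set.Icc (-1:ℝ) 1) (hs0 : s ≠ 0) :
    iteratedDeriv n (fun t => frakG m l a₁ a₂ u t) s =
      Complex.I ^ n * (Nat.factorial n : ℂ) *
        ∑ j ∈ Finset.range (n + 1), (-1 : ℂ) ^ (n - j) *
          (genBinom (-(a₁ : ℝ) / m) j : ℂ) * (genBinom (-(a₂ : ℝ) / m) (n - j) : ℂ) *
          frakG m l (a₁ + (j : ℤ) * m) (a₂ + ((n - j : ℕ) : ℤ) * m) u s := by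
  have hmR : (m : ℝ) ≠ 0 := Nat.cast_ne_zero.mpr (by omega)
  have hmC : (m : ℂ) ≠ 0 := Nat.cast_ne_zero.mpr (by omega)
  clear hs
  induction n, hn using Nat.le_induction generalizing s with
  | base =>
    rw [iteratedDeriv_one]
    have hD := hasDerivAt_frakG m l hm a₁ a₂ hu hs0
    rw [hD.deriv]
    rw [Finset.sum_range_succ, Finset.sum_range_succ, Finset.sum_range_zero]
    norm_num [genBinom_one, genBinom_zero]
    push_cast
    ring
  | succ n hn ih =>
    rw [iteratedDeriv_succ]
    have hev : (iteratedDeriv n (fun t => frakG m l a₁ a₂ u t)) =ᶠ[nhds s]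
        (fun t => Complex.I ^ n * (Nat.factorial n : ℂ) *
          ∑ j ∈ Finset.range (n + 1), (-1 : ℂ) ^ (n - j) *
            (genBinom (-(a₁ : ℝ) / m) j : ℂ) * (genBinom (-(a₂ : ℝ) / m) (n - j) : ℂ) *
            frakG m l (a₁ + (j : ℤ) * m) (a₂ + ((n - j : ℕ) : ℤ) * m) u t) := by
      filter_upwards [eventually_ne_nhds hs0] with t ht
      exact ih t ht
    rw [hev.deriv_eq]
    set T : ℕ → ℕ → ℂ := fun p q => frakG m l (a₁ + (p : ℤ) * m) (a₂ + (q : ℤ) * m) u s with hT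
    have hD : HasDerivAt (fun t => Complex.I ^ n * (Nat.factorial n : ℂ) *
        ∑ j ∈ Finset.range (n + 1), (-1 : ℂ) ^ (n - j) *
          (genBinom (-(a₁ : ℝ) / m) j : ℂ) * (genBinom (-(a₂ : ℝ) / m) (n - j) : ℂ) *
          frakG m l (a₁ + (j : ℤ) * m) (a₂ + ((n - j : ℕ) : ℤ) * m) u t)
        (Complex.I ^ n * (Nat.factorial n : ℂ) *
        ∑ j ∈ Finset.range (n + 1), (-1 : ℂ) ^ (n - j) *
          (genBinom (-(a₁ : ℝ) / m) j : ℂ) * (genBinom (-(a₂ : ℝ) / m) (n - j) : ℂ) *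
          (Complex.I * ((-((a₁ + (j : ℤ) * m : ℤ) : ℂ) / m) *
              frakG m l ((a₁ + (j : ℤ) * m) + m) (a₂ + ((n - j : ℕ) : ℤ) * m) u s +
            (((a₂ + ((n - j : ℕ) : ℤ) * m : ℤ) : ℂ) / m) *
              frakG m l (a₁ + (j : ℤ) * m) ((a₂ + ((n - j : ℕ) : ℤ) * m) + m) u s))) s := by
      apply HasDerivAt.const_mul
      apply HasDerivAt.fun_sum
      intro j hj
      exact (hasDerivAt_frakG m l hm (a₁ + (j : ℤ) * m) (a₂ + ((n - j : ℕ) : ℤ) * m)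
        hu hs0).const_mul _
    rw [hD.deriv]
    have hsum_eq : (∑ j ∈ Finset.range (n + 1), (-1 : ℂ) ^ (n - j) *
          (genBinom (-(a₁ : ℝ) / m) j : ℂ) * (genBinom (-(a₂ : ℝ) / m) (n - j) : ℂ) *
          (Complex.I * ((-((a₁ + (j : ℤ) * m : ℤ) : ℂ) / m) *
              frakG m l ((a₁ + (j : ℤ) * m) + m) (a₂ + ((n - j : ℕ) : ℤ) * m) u s +
            (((a₂ + ((n - j : ℕ) : ℤ) * m : ℤ) : ℂ) / m) *
              frakG m l (a₁ + (j : ℤ) * m) ((a₂ + ((n - j : ℕ) : ℤ) * m) + m) u s))) =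
        Complex.I * ∑ j ∈ Finset.range (n + 1), (-1 : ℂ) ^ (n - j) *
          ((genBinom (-(a₁ : ℝ) / m) j : ℝ) : ℂ) *
          ((genBinom (-(a₂ : ℝ) / m) (n - j) : ℝ) : ℂ) *
          ((((-(a₁ : ℝ) / m - (j : ℝ)) : ℝ) : ℂ) * T (j + 1) (n - j) +
            ((-(-(a₂ : ℝ) / m - ((n - j : ℕ) : ℝ)) : ℝ) : ℂ) * T j (n - j + 1)) := by
      rw [Finset.mul_sum]
      apply Finset.sum_congr rfl
      intro j hj
      have e1 : (a₁ + (j : ℤ) * m) + m = a₁ + ((j + 1 : ℕ) : ℤ) * m := by push_cast; ring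
      have e2 : (a₂ + ((n - j : ℕ) : ℤ) * m) + m = a₂ + ((n - j + 1 : ℕ) : ℤ) * m := by
        push_cast; ring
      have e3 : -((a₁ + (j : ℤ) * m : ℤ) : ℂ) / m = (((-(a₁ : ℝ) / m - (j : ℝ)) : ℝ) : ℂ) := by
        push_cast
        field_simp
        ring
      have e4 : ((a₂ + ((n - j : ℕ) : ℤ) * m : ℤ) : ℂ) / m =
          ((-(-(a₂ : ℝ) / m - ((n - j : ℕ) : ℝ)) : ℝ) : ℂ) := by
        push_cast
        field_simp
        ring
      rw [e1, e2, e3, e4, hT]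
      ring
    rw [hsum_eq, step_sum n (-(a₁ : ℝ) / m) (-(a₂ : ℝ) / m) T]
    simp only [hT]
    rw [Nat.factorial_succ]
    push_cast
    ring
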